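/- In a 2-dimensional C-WMMG, let C_1 and C_2 be minimal winning coalitions and suppose there are players x and y with x ∈ A_1(C_1) ∩ A_1(C_2) and y ∈ A_2(C_1) ∩ A_2(C_2). If for some t ∈ {1, 2} both |A_t(C_1)| = 1 and |A_t(C_2)| = 1, then C_1 = C_2. -/

import Mathlib

def q {P : Type*} [DecidableEq P] (w1 w2 : P → ℕ) (C : Finset P) : ℕ :=
  C.sup w1 + C.sup w2

def Winning {P : Type*} [Fintype P] [DecidableEq P] (w1 w2 : P → ℕ) (C : Finset P) : Prop :=
  q w1 w2 Cᶜ < q w1 w2 C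

def MWC {P : Type*} [Fintype P] [DecidableEq P] (w1 w2 : P → ℕ) (C : Finset P) : Prop :=
  Winning w1 w2 C ∧ ∀ D ⊂ C, ¬ Winning w1 w2 D

def Aset {P : Type*} [DecidableEq P] (w : P → ℕ) (C : Finset P) : Finset P :=
  C.filter (fun j => w j = C.sup w)

lemma aset_mem {P : Type*} [DecidableEq P] {w : P → ℕ} {C : Finset P} {x : P}
    (h : x ∈ Aset w C) : x ∈ C ∧ w x = C.sup w := by
  simpa [Aset, Finset.mem_filter] using h

lemma mwc_comm {P : Type*} [Fintype P] [DecidableEq P] {w1 w2 : P → ℕ} {C : Finset P}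
    (h : MWC w1 w2 C) : MWC w2 w1 C := by
  simpa [MWC, Winning, q, add_comm] using h

lemma subset_aux {P : Type*} [Fintype P] [DecidableEq P]
    (w1 w2 : P → ℕ) (C₁ C₂ : Finset P)
    (h1 : MWC w1 w2 C₁) (h2 : MWC w1 w2 C₂) (x y : P)
    (hx1 : x ∈ Aset w1 C₁) (hx2 : x ∈ Aset w1 C₂)
    (hy1 : y ∈ Aset w2 C₁) (hy2 : y ∈ Aset w2 C₂)
    (hs1 : (Aset w1 C₁).card = 1) (hs2 : (Aset w1 C₂).card = 1) :
    C₁ ⊆ C₂ := by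
  obtain ⟨hxC1, hxs1⟩ := aset_mem hx1
  obtain ⟨hxC2, hxs2⟩ := aset_mem hx2
  obtain ⟨hyC1, hys1⟩ := aset_mem hy1
  obtain ⟨hyC2, hys2⟩ := aset_mem hy2
  intro z hzC1
  by_contra hzC2
  have hzx : z ≠ x := fun h => hzC2 (h ▸ hxC2)
  have hzy : z ≠ y := fun h => hzC2 (h ▸ hyC2)
  -- w1 z < w1 x  (since A₁(C₁) = {x} and z ≠ x)
  have hw1z : w1 z < w1 x := by
    rcases lt_or_eq_of_le (Finset.le_sup (f := w1) hzC1) with h | h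
    · rwa [← hxs1] at h
    · exfalso
      obtain ⟨a, ha⟩ := Finset.card_eq_one.mp hs1
      have hz' : z ∈ Aset w1 C₁ := by
        simp [Aset, Finset.mem_filter, hzC1, h]
      rw [ha, Finset.mem_singleton] at hz'
      have hx' : x ∈ Aset w1 C₁ := hx1
      rw [ha, Finset.mem_singleton] at hx'
      exact hzx (hz'.trans hx'.symm)
  have hw2z : w2 z ≤ w2 y := hys1 ▸ Finset.le_sup (f := w2) hzC1
  -- minimality of C₁ at z
  have hD : ¬ Winning w1 w2 (C₁.erase z) := h1.2 _ (Finset.erase_ssubset hzC1)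
  have hDle : q w1 w2 (C₁.erase z) ≤ q w1 w2 (C₁.erase z)ᶜ := not_lt.mp hD
  have hxD : x ∈ C₁.erase z := Finset.mem_erase.mpr ⟨Ne.symm hzx, hxC1⟩
  have hyD : y ∈ C₁.erase z := Finset.mem_erase.mpr ⟨Ne.symm hzy, hyC1⟩
  have hsup1D : (C₁.erase z).sup w1 = w1 x :=
    le_antisymm (le_trans (Finset.sup_mono (Finset.erase_subset _ _)) hxs1.ge)
      (Finset.le_sup hxD)
  have hsup2D : (C₁.erase z).sup w2 = w2 y :=
    le_antisymm (le_trans (Finset.sup_mono (Finset.erase_subset _ _)) hys1.ge)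
      (Finset.le_sup hyD)
  have hcompl : (C₁.erase z)ᶜ = insert z C₁ᶜ := Finset.compl_erase
  set A := C₁ᶜ.sup w1 with hA
  set B := C₁ᶜ.sup w2 with hB
  have hDle' : w1 x + w2 y ≤ (w1 z ⊔ A) + (w2 z ⊔ B) := by
    have := hDle
    rw [q, q, hsup1D, hsup2D, hcompl, Finset.sup_insert, Finset.sup_insert] at this
    exact this
  have hwin1 : A + B < w1 x + w2 y := by
    have := h1.1
    rw [Winning, q, q, ← hxs1, ← hys1] at this
    exact this
  -- C₂ is winning
  have hwin2 : C₂ᶜ.sup w1 + C₂ᶜ.sup w2 < w1 x + w2 y := by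
    have := h2.1
    rw [Winning, q, q, ← hxs2, ← hys2] at this
    exact this
  have hzC2c : z ∈ C₂ᶜ := Finset.mem_compl.mpr hzC2
  -- helper: a member of C₁ᶜ with large w1 must lie in C₂ᶜ
  rcases le_total (w1 z) A with h1z | h1z
  · rcases le_total (w2 z) B with h2z | h2z
    · -- both maxes are A, B : contradicts winning of C₁
      rw [max_eq_right h1z, max_eq_right h2z] at hDle'
      omega
    · -- max1 = A, max2 = w2 z
      rw [max_eq_right h1z, max_eq_left h2z] at hDle'
      -- A ≥ w1 x ≥ 1
      have hAge : w1 x ≤ A := by omega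
      have hApos : 0 < A := lt_of_lt_of_le (Nat.pos_of_ne_zero (by omega)) hAge
      have hne : C₁ᶜ.Nonempty := by
        rcases Finset.eq_empty_or_nonempty C₁ᶜ with h | h
        · rw [hA, h] at hApos; simp at hApos
        · exact h
      obtain ⟨u, huC1c, huA⟩ := Finset.exists_mem_eq_sup C₁ᶜ hne w1
      have huw : w1 u = A := huA.symm
      have huC2c : u ∈ C₂ᶜ := by
        rw [Finset.mem_compl]
        intro huC2
        have hle : w1 u ≤ w1 x := hxs2 ▸ Finset.le_sup (f := w1) huC2
        have : w1 u = w1 x := le_antisymm hle (huw ▸ hAge)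
        have hu' : u ∈ Aset w1 C₂ := by
          simp [Aset, Finset.mem_filter, huC2, this, hxs2]
        obtain ⟨a, ha⟩ := Finset.card_eq_one.mp hs2
        rw [ha, Finset.mem_singleton] at hu'
        have hx' : x ∈ Aset w1 C₂ := hx2
        rw [ha, Finset.mem_singleton] at hx'
        have : u = x := hu'.trans hx'.symm
        exact (Finset.mem_compl.mp huC1c) (this ▸ hxC1)
      have e1 : w1 u ≤ C₂ᶜ.sup w1 := Finset.le_sup huC2c
      have e2 : w2 z ≤ C₂ᶜ.sup w2 := Finset.le_sup hzC2c
      omega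
  · rcases le_total (w2 z) B with h2z | h2z
    · -- max1 = w1 z, max2 = B : B > w2 y
      rw [max_eq_left h1z, max_eq_right h2z] at hDle'
      have hBge : w2 y < B := by omega
      have hne : C₁ᶜ.Nonempty := by
        rcases Finset.eq_empty_or_nonempty C₁ᶜ with h | h
        · rw [hB, h] at hBge; simp at hBge
        · exact h
      obtain ⟨u, huC1c, huB⟩ := Finset.exists_mem_eq_sup C₁ᶜ hne w2
      have huw : w2 u = B := huB.symm
      have huC2c : u ∈ C₂ᶜ := by
        rw [Finset.mem_compl]
        intro huC2
        have hle : w2 u ≤ w2 y := hys2 ▸ Finset.le_sup (f := w2) huC2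
        omega
      have e1 : w1 z ≤ C₂ᶜ.sup w1 := Finset.le_sup hzC2c
      have e2 : w2 u ≤ C₂ᶜ.sup w2 := Finset.le_sup huC2c
      omega
    · -- both maxes are z's weights : but w1 z + w2 z < w1 x + w2 y
      rw [max_eq_left h1z, max_eq_left h2z] at hDle'
      omega

theorem mwc_eq_of_singleton_busy_dim {P : Type*} [Fintype P] [DecidableEq P]
    (w1 w2 : P → ℕ) (C₁ C₂ : Finset P)
    (h1 : MWC w1 w2 C₁) (h2 : MWC w1 w2 C₂) (x y : P)
    (hx : x ∈ Aset w1 C₁ ∩ Aset w1 C₂) (hy : y ∈ Aset w2 C₁ ∩ Aset w2 C₂)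
    (ht : ((Aset w1 C₁).card = 1 ∧ (Aset w1 C₂).card = 1) ∨
          ((Aset w2 C₁).card = 1 ∧ (Aset w2 C₂).card = 1)) :
    C₁ = C₂ := by
  obtain ⟨hx1, hx2⟩ := Finset.mem_inter.mp hx
  obtain ⟨hy1, hy2⟩ := Finset.mem_inter.mp hy
  rcases ht with ⟨hs1, hs2⟩ | ⟨hs1, hs2⟩
  · exact le_antisymm
      (subset_aux w1 w2 C₁ C₂ h1 h2 x y hx1 hx2 hy1 hy2 hs1 hs2)
      (subset_aux w1 w2 C₂ C₁ h2 h1 x y hx2 hx1 hy2 hy1 hs2 hs1)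
  · exact le_antisymm
      (subset_aux w2 w1 C₁ C₂ (mwc_comm h1) (mwc_comm h2) y x hy1 hy2 hx1 hx2 hs1 hs2)
      (subset_aux w2 w1 C₂ C₁ (mwc_comm h2) (mwc_comm h1) y x hy2 hy1 hx2 hx1 hs2 hs1)
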